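/- If ψ : X × X → R is a negative definite kernel with ψ(x,x) = 0 for all x, then for every γ > 0 the function (x,y) ↦ exp(−γ ψ(x,y)) is a positive definite kernel on X (Schoenberg's theorem, one direction). -/

import Mathlib

/-- A symmetric function `K : X → X → ℝ` is a positive definite kernel if every
Gram matrix is positive semidefinite. -/
def IsPosDefKernel {X : Type*} (K : X → X → ℝ) : Prop :=
  (∀ x y, K x y = K y x) ∧
  ∀ (N : ℕ) (x : Fin N → X) (c : Fin N → ℝ),
    0 ≤ ∑ i, ∑ j, c i * c j * K (x i) (x j)

section Aux

open Matrix

variable {n : ℕ}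

lemma quadform_eq (M : Matrix (Fin n) (Fin n) ℝ) (c : Fin n → ℝ) :
    dotProduct (star c) (M *ᵥ c) = ∑ i, ∑ j, c i * c j * M i j := by
  simp only [dotProduct, mulVec, star_trivial]
  refine Finset.sum_congr rfl fun i _ => ?_
  rw [Finset.mul_sum]
  refine Finset.sum_congr rfl fun j _ => ?_
  ring

lemma quadform_nonneg_of_posSemidef {M : Matrix (Fin n) (Fin n) ℝ}
    (h : M.PosSemidef) (c : Fin n → ℝ) :
    0 ≤ ∑ i, ∑ j, c i * c j * M i j := by
  rw [← quadform_eq]; exact h.dotProduct_mulVec_nonneg c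

lemma posSemidef_of_quadform {M : Matrix (Fin n) (Fin n) ℝ}
    (hs : ∀ i j, M i j = M j i)
    (h : ∀ c : Fin n → ℝ, 0 ≤ ∑ i, ∑ j, c i * c j * M i j) :
    M.PosSemidef := by
  refine Matrix.PosSemidef.of_dotProduct_mulVec_nonneg ?_ ?_
  · ext i j
    simpa using hs j i
  · intro c
    rw [quadform_eq]; exact h c

open scoped MatrixOrder in
noncomputable def Matrix.PosSemidef.sqrt {n : ℕ} {B : Matrix (Fin n) (Fin n) ℝ} (_hB : B.PosSemidef) :
    Matrix (Fin n) (Fin n) ℝ := CFC.sqrt B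
open scoped MatrixOrder in
lemma Matrix.PosSemidef.sqrt_mul_self {n : ℕ} {B : Matrix (Fin n) (Fin n) ℝ} (hB : B.PosSemidef) :
    hB.sqrt * hB.sqrt = B :=
  CFC.sqrt_mul_sqrt_self B (Matrix.nonneg_iff_posSemidef.mpr hB)
open scoped MatrixOrder in
lemma Matrix.PosSemidef.posSemidef_sqrt {n : ℕ} {B : Matrix (Fin n) (Fin n) ℝ} (hB : B.PosSemidef) :
    hB.sqrt.PosSemidef :=
  Matrix.nonneg_iff_posSemidef.mp (CFC.sqrt_nonneg B)

/-- Schur product theorem, quadratic form version. -/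
lemma schur_quadform {A B : Matrix (Fin n) (Fin n) ℝ}
    (hA : A.PosSemidef) (hB : B.PosSemidef) (c : Fin n → ℝ) :
    0 ≤ ∑ i, ∑ j, c i * c j * (A i j * B i j) := by
  classical
  have hSS : hB.sqrt * hB.sqrt = B := hB.sqrt_mul_self
  have hSsymm : ∀ i j, hB.sqrt i j = hB.sqrt j i := by
    intro i j
    have h := hB.posSemidef_sqrt.isHermitian
    have := congrFun (congrFun h j) i
    simpa [Matrix.conjTranspose_apply] using this
  have hBentry : ∀ i j, B i j = ∑ k, hB.sqrt k i * hB.sqrt k j := by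
    intro i j
    have h := congrFun (congrFun hSS i) j
    rw [Matrix.mul_apply] at h
    rw [← h]
    exact Finset.sum_congr rfl fun k _ => by rw [hSsymm i k]
  calc (0:ℝ) ≤ ∑ k, ∑ i, ∑ j, (c i * hB.sqrt k i) * (c j * hB.sqrt k j) * A i j := by
        apply Finset.sum_nonneg
        intro k _
        exact quadform_nonneg_of_posSemidef hA (fun i => c i * hB.sqrt k i)
    _ = ∑ i, ∑ j, c i * c j * (A i j * B i j) := by
        rw [Finset.sum_comm]
        refine Finset.sum_congr rfl fun i _ => ?_
        rw [Finset.sum_comm]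
        refine Finset.sum_congr rfl fun j _ => ?_
        rw [hBentry i j, Finset.mul_sum, Finset.mul_sum]
        refine Finset.sum_congr rfl fun k _ => ?_
        ring

/-- Hadamard powers of a symmetric PSD matrix are PSD. -/
lemma hadamard_pow_posSemidef {A : Matrix (Fin n) (Fin n) ℝ}
    (hA : A.PosSemidef) (m : ℕ) :
    (Matrix.of fun i j => (A i j) ^ m).PosSemidef := by
  induction m with
  | zero =>
    apply posSemidef_of_quadform (by simp)
    intro c
    have h : ∑ i, ∑ j, c i * c j * (Matrix.of fun i j => (A i j) ^ 0) i j
        = (∑ i, c i) * (∑ j, c j) := by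
      rw [Finset.sum_mul]
      refine Finset.sum_congr rfl fun i _ => ?_
      rw [Finset.mul_sum]
      simp
    rw [h, ← sq]
    positivity
  | succ m ih =>
    have hsymm : ∀ i j, A i j = A j i := by
      intro i j
      have := congrFun (congrFun hA.isHermitian j) i
      simpa [Matrix.conjTranspose_apply] using this
    apply posSemidef_of_quadform
    · intro i j; simp [hsymm i j]
    · intro c
      have := schur_quadform ih hA c
      simpa [pow_succ, mul_comm, mul_assoc, mul_left_comm] using this

/-- Entrywise exponential of a PSD matrix has nonneg quadratic form. -/
lemma exp_quadform_nonneg {A : Matrix (Fin n) (Fin n) ℝ}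
    (hA : A.PosSemidef) (c : Fin n → ℝ) :
    0 ≤ ∑ i, ∑ j, c i * c j * Real.exp (A i j) := by
  classical
  have hexp : ∀ x : ℝ, Real.exp x = ∑' m : ℕ, x ^ m / m.factorial := by
    intro x
    rw [Real.exp_eq_exp_ℝ, NormedSpace.exp_eq_tsum_div]
  have hsummable : ∀ (i j : Fin n),
      Summable (fun m : ℕ => c i * c j * ((A i j) ^ m / m.factorial)) :=
    fun i j => (Real.summable_pow_div_factorial (A i j)).mul_left _
  have key : ∑ i, ∑ j, c i * c j * Real.exp (A i j)
      = ∑' m : ℕ, ∑ i, ∑ j, c i * c j * ((A i j) ^ m / m.factorial) := by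
    calc ∑ i, ∑ j, c i * c j * Real.exp (A i j)
        = ∑ i, ∑ j, ∑' m : ℕ, c i * c j * ((A i j) ^ m / m.factorial) := by
          refine Finset.sum_congr rfl fun i _ => Finset.sum_congr rfl fun j _ => ?_
          rw [hexp, ← tsum_mul_left]
      _ = ∑ i, ∑' m : ℕ, ∑ j, c i * c j * ((A i j) ^ m / m.factorial) := by
          refine Finset.sum_congr rfl fun i _ => ?_
          rw [Summable.tsum_finsetSum (fun j _ => hsummable i j)]
      _ = ∑' m : ℕ, ∑ i, ∑ j, c i * c j * ((A i j) ^ m / m.factorial) := by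
          rw [Summable.tsum_finsetSum (fun i _ => summable_sum (fun j _ => hsummable i j))]
  rw [key]
  apply tsum_nonneg
  intro m
  have h1 : ∑ i, ∑ j, c i * c j * ((A i j) ^ m / m.factorial)
      = (1 / m.factorial : ℝ) * ∑ i, ∑ j, c i * c j * (Matrix.of fun i j => (A i j) ^ m) i j := by
    rw [Finset.mul_sum]
    refine Finset.sum_congr rfl fun i _ => ?_
    rw [Finset.mul_sum]
    refine Finset.sum_congr rfl fun j _ => ?_
    simp only [Matrix.of_apply]
    ring
  rw [h1]
  have h2 := quadform_nonneg_of_posSemidef (hadamard_pow_posSemidef hA m) c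
  positivity

/-- The centered kernel of a conditionally negative definite kernel is positive
semidefinite (quadratic form version). -/
lemma centered_quadform_nonneg {X : Type*} (ψ : X → X → ℝ)
    (hsymm : ∀ x y, ψ x y = ψ y x)
    (hdiag : ∀ x, ψ x x = 0)
    (hneg : ∀ (N : ℕ) (x : Fin N → X) (c : Fin N → ℝ), (∑ i, c i) = 0 →
      ∑ i, ∑ j, c i * c j * ψ (x i) (x j) ≤ 0)
    (N : ℕ) (x : Fin N → X) (x0 : X) (b : Fin N → ℝ) :
    0 ≤ ∑ i, ∑ j, b i * b j * (ψ (x i) x0 + ψ (x j) x0 - ψ (x i) (x j)) := by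
  classical
  have hdsum : ∑ i, (Fin.snoc b (-(∑ k, b k)) : Fin (N+1) → ℝ) i = 0 := by
    rw [Fin.sum_univ_castSucc]
    simp only [Fin.snoc_castSucc, Fin.snoc_last]
    ring
  have key := hneg (N+1) (Fin.snoc x x0 : Fin (N+1) → X) (Fin.snoc b (-(∑ k, b k))) hdsum
  rw [Fin.sum_univ_castSucc] at key
  have h1 : ∀ i : Fin N,
      ∑ j, (Fin.snoc b (-(∑ k, b k)) : Fin (N+1) → ℝ) i.castSucc
        * (Fin.snoc b (-(∑ k, b k)) : Fin (N+1) → ℝ) j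
        * ψ ((Fin.snoc x x0 : Fin (N+1) → X) i.castSucc) ((Fin.snoc x x0 : Fin (N+1) → X) j)
      = (∑ j, b i * b j * ψ (x i) (x j)) - b i * (∑ k, b k) * ψ (x i) x0 := by
    intro i
    rw [Fin.sum_univ_castSucc]
    simp only [Fin.snoc_castSucc, Fin.snoc_last]
    ring
  have h2 : ∑ j, (Fin.snoc b (-(∑ k, b k)) : Fin (N+1) → ℝ) (Fin.last N)
        * (Fin.snoc b (-(∑ k, b k)) : Fin (N+1) → ℝ) j
        * ψ ((Fin.snoc x x0 : Fin (N+1) → X) (Fin.last N)) ((Fin.snoc x x0 : Fin (N+1) → X) j)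
      = -((∑ k, b k) * ∑ j, b j * ψ x0 (x j)) := by
    rw [Fin.sum_univ_castSucc]
    simp only [Fin.snoc_castSucc, Fin.snoc_last]
    have hrow : ∑ j, -(∑ k, b k) * b j * ψ x0 (x j)
        = -((∑ k, b k) * ∑ j, b j * ψ x0 (x j)) := by
      calc ∑ j, -(∑ k, b k) * b j * ψ x0 (x j)
          = ∑ j, -((∑ k, b k) * (b j * ψ x0 (x j))) :=
            Finset.sum_congr rfl fun j _ => by ring
        _ = -∑ j, (∑ k, b k) * (b j * ψ x0 (x j)) := by
            rw [Finset.sum_neg_distrib]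
        _ = -((∑ k, b k) * ∑ j, b j * ψ x0 (x j)) := by
            rw [← Finset.mul_sum]
    rw [hrow, hdiag x0]
    ring
  rw [Finset.sum_congr rfl (fun i _ => h1 i), h2, Finset.sum_sub_distrib] at key
  have h3 : ∑ i, b i * (∑ k, b k) * ψ (x i) x0
      = (∑ k, b k) * ∑ i, b i * ψ (x i) x0 := by
    rw [Finset.mul_sum]
    exact Finset.sum_congr rfl fun i _ => by ring
  rw [h3] at key
  have hT' : ∑ j, b j * ψ x0 (x j) = ∑ j, b j * ψ (x j) x0 :=
    Finset.sum_congr rfl fun j _ => by rw [hsymm x0 (x j)]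
  rw [hT'] at key
  -- now expand the goal
  have e : ∑ i, ∑ j, b i * b j * (ψ (x i) x0 + ψ (x j) x0 - ψ (x i) (x j))
      = (∑ i, b i * ψ (x i) x0) * (∑ k, b k)
        + (∑ k, b k) * (∑ j, b j * ψ (x j) x0)
        - ∑ i, ∑ j, b i * b j * ψ (x i) (x j) := by
    have ea : ∀ i : Fin N, ∑ j, b i * b j * ψ (x i) x0
        = b i * ψ (x i) x0 * ∑ k, b k := by
      intro i
      rw [Finset.mul_sum]
      exact Finset.sum_congr rfl fun j _ => by ring
    have eb : ∀ i : Fin N, ∑ j, b i * b j * ψ (x j) x0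
        = b i * ∑ j, b j * ψ (x j) x0 := by
      intro i
      rw [Finset.mul_sum]
      exact Finset.sum_congr rfl fun j _ => by ring
    have estep : ∀ i : Fin N,
        ∑ j, b i * b j * (ψ (x i) x0 + ψ (x j) x0 - ψ (x i) (x j))
        = b i * ψ (x i) x0 * (∑ k, b k) + b i * (∑ j, b j * ψ (x j) x0)
          - ∑ j, b i * b j * ψ (x i) (x j) := by
      intro i
      calc ∑ j, b i * b j * (ψ (x i) x0 + ψ (x j) x0 - ψ (x i) (x j))
          = ∑ j, (b i * b j * ψ (x i) x0 + b i * b j * ψ (x j) x0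
              - b i * b j * ψ (x i) (x j)) :=
            Finset.sum_congr rfl fun j _ => by ring
        _ = (∑ j, b i * b j * ψ (x i) x0) + (∑ j, b i * b j * ψ (x j) x0)
            - ∑ j, b i * b j * ψ (x i) (x j) := by
            rw [Finset.sum_sub_distrib, Finset.sum_add_distrib]
        _ = _ := by rw [ea i, eb i]
    rw [Finset.sum_congr rfl (fun i _ => estep i), Finset.sum_sub_distrib,
      Finset.sum_add_distrib, ← Finset.sum_mul, ← Finset.sum_mul]
  rw [e]
  linarith [key]

end Aux

theorem schoenberg_exp_posDefKernel {X : Type*} (ψ : X → X → ℝ)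
    (hsymm : ∀ x y, ψ x y = ψ y x)
    (hdiag : ∀ x, ψ x x = 0)
    (hneg : ∀ (N : ℕ) (x : Fin N → X) (c : Fin N → ℝ), (∑ i, c i) = 0 →
      ∑ i, ∑ j, c i * c j * ψ (x i) (x j) ≤ 0)
    (γ : ℝ) (hγ : 0 < γ) :
    IsPosDefKernel (fun x y => Real.exp (-γ * ψ x y)) := by
  constructor
  · intro x y
    simp [hsymm x y]
  · intro N x c
    rcases Nat.eq_zero_or_pos N with rfl | hN
    · simp
    have x0 : X := x ⟨0, hN⟩
    -- the centered kernel matrix, scaled by γ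
    have hMpsd : (Matrix.of fun i j =>
        γ * (ψ (x i) x0 + ψ (x j) x0 - ψ (x i) (x j))).PosSemidef := by
      apply posSemidef_of_quadform
      · intro i j
        simp only [Matrix.of_apply]
        rw [hsymm (x i) (x j)]
        ring
      · intro b
        have h0 := centered_quadform_nonneg ψ hsymm hdiag hneg N x x0 b
        have h1 : ∑ i, ∑ j, b i * b j * (Matrix.of fun i j =>
              γ * (ψ (x i) x0 + ψ (x j) x0 - ψ (x i) (x j))) i j
            = γ * ∑ i, ∑ j, b i * b j * (ψ (x i) x0 + ψ (x j) x0 - ψ (x i) (x j)) := by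
          rw [Finset.mul_sum]
          refine Finset.sum_congr rfl fun i _ => ?_
          rw [Finset.mul_sum]
          refine Finset.sum_congr rfl fun j _ => ?_
          simp only [Matrix.of_apply]
          ring
        rw [h1]
        positivity
    -- conclude using the factorization exp(-γψ(xi,xj)) = f i * f j * exp(M i j)
    have hfac : ∀ i j, Real.exp (-γ * ψ (x i) (x j))
        = Real.exp (-γ * ψ (x i) x0) * Real.exp (-γ * ψ (x j) x0)
          * Real.exp ((Matrix.of fun i j =>
              γ * (ψ (x i) x0 + ψ (x j) x0 - ψ (x i) (x j))) i j) := by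
      intro i j
      simp only [Matrix.of_apply, ← Real.exp_add]
      congr 1
      ring
    have hq := exp_quadform_nonneg hMpsd (fun i => c i * Real.exp (-γ * ψ (x i) x0))
    calc (0:ℝ)
        ≤ ∑ i, ∑ j, (c i * Real.exp (-γ * ψ (x i) x0))
            * (c j * Real.exp (-γ * ψ (x j) x0))
            * Real.exp ((Matrix.of fun i j =>
                γ * (ψ (x i) x0 + ψ (x j) x0 - ψ (x i) (x j))) i j) := hq
      _ = ∑ i, ∑ j, c i * c j * Real.exp (-γ * ψ (x i) (x j)) := by
          refine Finset.sum_congr rfl fun i _ => Finset.sum_congr rfl fun j _ => ?_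
          rw [hfac i j]
          ring
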